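/- arXiv:1611.03884 — 4 statements merged into one kernel-verified Lean document; each statement's English description precedes it below -/
import Mathlib

section
/- Let G and H be finite groups and let φ : G → H be a group homomorphism. Suppose that for every finite group Q, the induced map Hom(H, Q)/Q → Hom(G, Q)/Q (where Q acts on homomorphism sets by conjugation) is a bijection. Then φ is an isomorphism. -/
/-- Conjugacy of group homomorphisms: `f ~ g` iff `g = (conj by q) ∘ f` for some `q`. -/
def conjSetoid (A Q : Type) [Group A] [Group Q] : Setoid (A →* Q) where
  r f g := ∃ q : Q, ∀ a : A, g a = q * f a * q⁻¹
  iseqv := by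
    constructor
    · intro f; exact ⟨1, by simp⟩
    · rintro f g ⟨q, hq⟩
      exact ⟨q⁻¹, fun a => by rw [hq a]; group⟩
    · rintro f g h ⟨q, hq⟩ ⟨r, hr⟩
      exact ⟨r * q, fun a => by rw [hr a, hq a]; group⟩

/-- The map `Hom(H,Q)/Q → Hom(G,Q)/Q` induced by precomposition with `φ : G →* H`. -/
def precompMap {G H : Type} [Group G] [Group H] (φ : G →* H) (Q : Type) [Group Q] :
    Quotient (conjSetoid H Q) → Quotient (conjSetoid G Q) :=
  Quotient.map (fun f => f.comp φ) (by
    rintro f g ⟨q, hq⟩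
    exact ⟨q, fun a => hq (φ a)⟩)

/-- If `G`, `H` are finite groups and `φ : G →* H` induces a bijection
`Hom(H,Q)/Q → Hom(G,Q)/Q` for every finite group `Q`, then `φ` is an isomorphism. -/
theorem stmt0 {G H : Type} [Group G] [Finite G] [Group H] [Finite H] (φ : G →* H)
    (h : ∀ (Q : Type) [Group Q] [Finite Q], Function.Bijective (precompMap φ Q)) :
    Function.Bijective φ := by
  -- Step 1: get a retraction up to conjugation, using surjectivity with Q = G.
  obtain ⟨fcls, hf⟩ := (h G).2 ⟦MonoidHom.id G⟧
  obtain ⟨f, rfl⟩ := Quotient.exists_rep fcls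
  have hf' : (conjSetoid G G).r (f.comp φ) (MonoidHom.id G) := Quotient.exact hf
  obtain ⟨q, hq⟩ := hf'
  -- hq : ∀ a, a = q * f (φ a) * q⁻¹
  set ψ : H →* G := (MulAut.conj q).toMonoidHom.comp f with hψ
  have hψφ : ∀ a : G, ψ (φ a) = a := by
    intro a
    simpa [hψ] using (hq a).symm
  -- Injectivity of φ
  have hinj : Function.Injective φ := by
    intro a b hab
    have := congrArg ψ hab
    rwa [hψφ a, hψφ b] at this
  refine ⟨hinj, ?_⟩
  -- Step 2: use injectivity with Q = H to compare id_H with φ ∘ ψ.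
  have hcomp : (φ.comp ψ).comp φ = (MonoidHom.id H).comp φ := by
    ext a
    simp [hψφ a]
  have hkey : (⟦MonoidHom.id H⟧ : Quotient (conjSetoid H H)) = ⟦φ.comp ψ⟧ := by
    apply (h H).1
    show Quotient.map _ _ _ = Quotient.map _ _ _
    rw [Quotient.map_mk, Quotient.map_mk]
    exact congrArg _ hcomp.symm
  obtain ⟨r, hr⟩ := Quotient.exact hkey
  -- hr : ∀ a, φ (ψ a) = r * a * r⁻¹
  intro b
  refine ⟨ψ (r⁻¹ * b * r), ?_⟩
  have := hr (r⁻¹ * b * r)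
  simp only [MonoidHom.comp_apply, MonoidHom.id_apply] at this hr
  rw [hr (r⁻¹ * b * r)]
  group
end

section
/- Let R be a commutative ring of prime characteristic p that is F-finite, i.e., the Frobenius endomorphism F : R → R, F(r) = r^p, makes R into a finite module over itself via F. If S is an étale R-algebra, then S is F-finite. -/
open Polynomial

/-- F-finiteness transfers along surjective ring homomorphisms. -/
theorem frobFinite_of_surjective {A B : Type*} [CommRing A] [CommRing B] (p : ℕ)
    [ExpChar A p] [ExpChar B p] (f : A →+* B) (hf : Function.Surjective f)
    (hA : (frobenius A p).Finite) : (frobenius B p).Finite := by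
  have h : (frobenius B p).comp f = f.comp (frobenius A p) := by
    ext x
    simp [RingHom.map_frobenius]
  exact RingHom.Finite.of_comp_finite (f := f)
    (h ▸ RingHom.Finite.comp (RingHom.Finite.of_surjective f hf) hA)

/-- If `R` is F-finite, so is `R[X]`. -/
theorem frobFinite_polynomial {R : Type*} [CommRing R] (p : ℕ) [Fact p.Prime] [CharP R p]
    (hR : (frobenius R p).Finite) : (frobenius (Polynomial R) p).Finite := by
  classical
  have hp : 0 < p := (Fact.out : p.Prime).pos
  letI instR : Algebra R R := (frobenius R p).toAlgebra
  letI instP : Algebra R[X] R[X] := (frobenius R[X] p).toAlgebra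
  letI : Module R R := instR.toModule
  letI : Module R[X] R[X] := instP.toModule
  have hRfin : @Module.Finite R R _ _ instR.toModule := hR
  obtain ⟨s, hs⟩ := hRfin.fg_top
  show @Module.Finite R[X] R[X] _ _ instP.toModule
  refine ⟨⟨(s ×ˢ Finset.range p).image (fun q => C q.1 * X ^ q.2), ?_⟩⟩
  set T : Finset R[X] := (s ×ˢ Finset.range p).image (fun q => C q.1 * X ^ q.2) with hT
  rw [eq_top_iff]
  rintro f -
  have key : ∀ (r : ℕ), r < p → ∀ a : R, (C a * X ^ r) ∈ Submodule.span R[X] (T : Set R[X]) := by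
    intro r hr a
    have ha : a ∈ Submodule.span R (s : Set R) := hs ▸ Submodule.mem_top
    induction ha using Submodule.span_induction with
    | mem c hc =>
      refine Submodule.subset_span ?_
      rw [hT]
      refine Finset.mem_coe.2 (Finset.mem_image.2 ⟨(c, r), ?_, rfl⟩)
      exact Finset.mem_product.2 ⟨hc, Finset.mem_range.2 hr⟩
    | zero => simp
    | add x y _ _ ihx ihy =>
      have : C (x + y) * X ^ r = C x * X ^ r + C y * X ^ r := by
        rw [map_add, add_mul]
      rw [this]; exact Submodule.add_mem _ ihx ihy
    | smul b c _ ih =>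
      have hb : C (@HSMul.hSMul R R R (@instHSMul R R instR.toSMul) b c) * X ^ r =
          @HSMul.hSMul R[X] R[X] R[X] (@instHSMul R[X] R[X] instP.toSMul) (C b) (C c * X ^ r) := by
        rw [Algebra.smul_def, Algebra.smul_def, RingHom.algebraMap_toAlgebra,
          RingHom.algebraMap_toAlgebra]
        simp only [frobenius_def, map_mul, map_pow]
        ring
      rw [hb]; exact Submodule.smul_mem _ _ ih
  induction f using Polynomial.induction_on' with
  | add f g ihf ihg => exact Submodule.add_mem _ ihf ihg
  | monomial n a =>
    have hmon : (monomial n a : R[X]) =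
        @HSMul.hSMul R[X] R[X] R[X] (@instHSMul R[X] R[X] instP.toSMul) ((X : R[X]) ^ (n / p)) (C a * X ^ (n % p)) := by
      rw [Algebra.smul_def, RingHom.algebraMap_toAlgebra, frobenius_def, ← pow_mul]
      symm
      calc X ^ (n / p * p) * (C a * X ^ (n % p))
          = C a * (X ^ (n / p * p) * X ^ (n % p)) := by ring
        _ = C a * X ^ (n / p * p + n % p) := by rw [← pow_add]
        _ = C a * X ^ n := by rw [Nat.div_add_mod']
        _ = monomial n a := C_mul_X_pow_eq_monomial
    rw [hmon]
    exact Submodule.smul_mem _ _ (key _ (Nat.mod_lt _ hp) a)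

/-- If `R` is F-finite, so is any multivariate polynomial ring over `R` in finitely
many variables. -/
theorem frobFinite_mvPolynomial {R : Type*} [CommRing R] (p : ℕ) [Fact p.Prime] [CharP R p]
    (hR : (frobenius R p).Finite) (n : ℕ) :
    (frobenius (MvPolynomial (Fin n) R) p).Finite := by
  induction n with
  | zero =>
    exact frobFinite_of_surjective p
      ((MvPolynomial.isEmptyRingEquiv R (Fin 0)).symm : R ≃+* MvPolynomial (Fin 0) R).toRingHom
      (MvPolynomial.isEmptyRingEquiv R (Fin 0)).symm.surjective hR
  | succ n ih =>
    have hpoly := frobFinite_polynomial p ih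
    exact frobFinite_of_surjective p
      ((MvPolynomial.finSuccEquiv R n).symm.toRingEquiv :
        Polynomial (MvPolynomial (Fin n) R) ≃+* MvPolynomial (Fin (n + 1)) R).toRingHom
      (MvPolynomial.finSuccEquiv R n).symm.surjective hpoly

/-- If `R` is an `F`-finite commutative ring of prime characteristic `p` (the Frobenius
`r ↦ r^p` is a finite ring map) and `S` is an étale `R`-algebra, then `S` is `F`-finite. -/
theorem stmt8 (p : ℕ) [Fact p.Prime] (R : Type) [CommRing R] [CharP R p]
    (hR : (frobenius R p).Finite)
    (S : Type) [CommRing S] [Algebra R S] [CharP S p] (hS : Algebra.Etale R S) :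
    (frobenius S p).Finite := by
  have hft : Algebra.FiniteType R S := @Algebra.FiniteType.of_finitePresentation R S _ _ _ hS.finitePresentation
  obtain ⟨n, f, hf⟩ := Algebra.FiniteType.iff_quotient_mvPolynomial''.1 hft
  exact frobFinite_of_surjective p f.toRingHom hf (frobFinite_mvPolynomial p hR n)
end

section
/- Let R be a commutative ring of prime characteristic p and let S be an étale R-algebra. Then the relative Frobenius map R^{1/p} ⊗_R S → S^{1/p} is an isomorphism, where R^{1/p} and S^{1/p} denote the rings R and S viewed as algebras over themselves via Frobenius. -/
/-- A commuting square of commutative rings is cocartesian (a pushout) if it satisfies the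
universal property of the pushout. -/
def IsRingPushout {A B C D : Type} [CommRing A] [CommRing B] [CommRing C] [CommRing D]
    (f : A →+* B) (g : A →+* C) (h : B →+* D) (k : C →+* D) : Prop :=
  h.comp f = k.comp g ∧
    ∀ (E : Type) [CommRing E] (u : B →+* E) (v : C →+* E),
      u.comp f = v.comp g → ∃! w : D →+* E, w.comp h = u ∧ w.comp k = v

open scoped TensorProduct

set_option linter.unusedSectionVars false
set_option synthInstance.maxHeartbeats 1000000
set_option maxHeartbeats 1000000

namespace Stmt9Aux

variable (p : ℕ) [Fact p.Prime]

lemma charP_of_ringHom {A B : Type*} [CommRing A] [CommRing B] (f : A →+* B) [CharP B p]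
    (h : (p : A) = 0) : CharP A p where
  cast_eq_zero_iff n := by
    constructor
    · intro hn
      have : (n : B) = 0 := by rw [← map_natCast f, hn, map_zero]
      exact (CharP.cast_eq_zero_iff B p n).mp this
    · rintro ⟨k, rfl⟩
      push_cast
      rw [h, zero_mul]

/-- `R` as an `R`-algebra via Frobenius. -/
def Rp (_p : ℕ) (R : Type) : Type := R

/-- `S` as the codomain of the relative Frobenius. -/
def Sp (_p : ℕ) (S : Type) : Type := S

variable (R : Type) [CommRing R] [CharP R p]

instance : CommRing (Rp p R) := inferInstanceAs (CommRing R)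
instance : CharP (Rp p R) p := inferInstanceAs (CharP R p)
instance : Algebra R (Rp p R) := (frobenius R p).toAlgebra

variable (S : Type) [CommRing S] [Algebra R S] [CharP S p]

instance : CommRing (Sp p S) := inferInstanceAs (CommRing S)
instance : CharP (Sp p S) p := inferInstanceAs (CharP S p)
instance : Algebra (Rp p R) (Sp p S) := inferInstanceAs (Algebra R S)
instance : Algebra R (Sp p S) := ((algebraMap R S).comp (frobenius R p)).toAlgebra
instance : IsScalarTower R (Rp p R) (Sp p S) :=
  IsScalarTower.of_algebraMap_eq fun _ => rfl

/-- Frobenius of `S` as an `R`-algebra hom into the twisted `S`. -/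
noncomputable def frobAlgHom : S →ₐ[R] Sp p S where
  toFun s := (frobenius S p s : S)
  map_one' := map_one (frobenius S p)
  map_mul' := map_mul (frobenius S p)
  map_zero' := map_zero (frobenius S p)
  map_add' := map_add (frobenius S p)
  commutes' r := ((algebraMap R S).map_frobenius p r).symm

/-- The relative Frobenius `R^{1/p} ⊗_R S → S^{1/p}`. -/
noncomputable def theta : (Rp p R) ⊗[R] S →ₐ[Rp p R] Sp p S :=
  Algebra.TensorProduct.lift (R := R) (S := Rp p R) (A := Rp p R) (B := S) (C := Sp p S)
    (Algebra.ofId (Rp p R) (Sp p S)) (frobAlgHom p R S) (fun _ _ => Commute.all _ _)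

lemma theta_tmul (x : Rp p R) (s : S) :
    theta p R S (x ⊗ₜ s) = (algebraMap R S (show R from x) * s ^ p :) := rfl

lemma charP_T : CharP ((Rp p R) ⊗[R] S) p := by
  apply charP_of_ringHom p (theta p R S).toRingHom
  have : ((p : ℕ) : (Rp p R) ⊗[R] S) =
      Algebra.TensorProduct.includeLeftRingHom ((p : ℕ) : Rp p R) := by
    rw [map_natCast]
  rw [this, CharP.cast_eq_zero, map_zero]

lemma pow_p_eq (x : (Rp p R) ⊗[R] S) :
    x ^ p = (1 : Rp p R) ⊗ₜ[R] (show S from theta p R S x) := by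
  haveI := charP_T p R S
  have hp : p ≠ 0 := (Fact.out : p.Prime).ne_zero
  induction x using TensorProduct.induction_on with
  | zero =>
    rw [zero_pow hp, map_zero]
    show (0 : _) = (1 : Rp p R) ⊗ₜ[R] (0 : S)
    rw [TensorProduct.tmul_zero]
  | tmul r s =>
    rw [Algebra.TensorProduct.tmul_pow, theta_tmul]
    have h1 : (r ^ p : Rp p R) = algebraMap R (Rp p R) (show R from r) := rfl
    rw [h1, Algebra.algebraMap_eq_smul_one, TensorProduct.smul_tmul, Algebra.smul_def]
  | add x y hx hy =>
    rw [add_pow_char, hx, hy, map_add]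
    show _ = (1 : Rp p R) ⊗ₜ[R] ((show S from theta p R S x) + (show S from theta p R S y))
    rw [TensorProduct.tmul_add]

variable {p R S} in
lemma idem_eq_zero_of_nilpotent {A : Type*} [CommRing A] {e : A}
    (he : IsIdempotentElem e) (hn : IsNilpotent e) : e = 0 := by
  obtain ⟨n, hn⟩ := hn
  cases n with
  | zero =>
    have h1 : (1 : A) = 0 := by simpa using hn
    calc e = e * 1 := (mul_one e).symm
    _ = e * 0 := by rw [h1]
    _ = 0 := mul_zero e
  | succ n => rw [← he.pow_succ_eq n, hn]

theorem theta_bijective (hS : Algebra.Etale R S) :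
    Function.Bijective (theta p R S) := by
  haveI := hS.formallyEtale
  haveI := hS.finitePresentation
  haveI hFEs : Algebra.FormallyEtale (Rp p R) (Sp p S) := hS.formallyEtale
  haveI hFPs : Algebra.FinitePresentation (Rp p R) (Sp p S) := hS.finitePresentation
  -- the subalgebra generated by p-th powers
  set S' : Subalgebra R S := Algebra.adjoin R (Set.range fun s : S => s ^ p) with hS'
  haveI : Algebra.FiniteType (↥S') S :=
    Algebra.FiniteType.of_restrictScalars_finiteType (R := R) (S := ↥S') (A := S)
  haveI : Algebra.FormallyUnramified (↥S') S :=
    Algebra.FormallyUnramified.of_restrictScalars (R := R) (A := ↥S') (B := S)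
  haveI : CharP (S ⊗[↥S'] S) p := by
    apply charP_of_ringHom p (Algebra.TensorProduct.lmul' (S := S) (R := ↥S')).toRingHom
    have : ((p : ℕ) : S ⊗[↥S'] S) =
        Algebra.TensorProduct.includeLeftRingHom ((p : ℕ) : S) := by rw [map_natCast]
    rw [this, CharP.cast_eq_zero, map_zero]
  -- the diagonal ideal is zero
  have hIbot : KaehlerDifferential.ideal (↥S') S = ⊥ := by
    have h1 : IsIdempotentElem (KaehlerDifferential.ideal (↥S') S) :=
      (KaehlerDifferential.ideal (↥S') S).cotangent_subsingleton_iff.mp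
        (Algebra.FormallyUnramified.subsingleton_kaehlerDifferential (R := ↥S') (A := S))
    have h2 : (KaehlerDifferential.ideal (↥S') S).FG := KaehlerDifferential.ideal_fg (↥S') S
    obtain ⟨e, he, hIe⟩ := (Ideal.isIdempotentElem_iff_of_fg _ h2).mp h1
    have hle : KaehlerDifferential.ideal (↥S') S ≤ nilradical (S ⊗[↥S'] S) := by
      rw [← KaehlerDifferential.span_range_eq_ideal, Ideal.span_le]
      rintro _ ⟨s, rfl⟩
      refine mem_nilradical.mpr ⟨p, ?_⟩
      have hc : s ^ p ∈ S' := Algebra.subset_adjoin ⟨s, rfl⟩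
      have h1s : (s ^ p) ⊗ₜ[↥S'] (1 : S) = (1 : S) ⊗ₜ[↥S'] (s ^ p) := by
        have hsm : (⟨s ^ p, hc⟩ : ↥S') • (1 : S) = s ^ p := by
          rw [Algebra.smul_def, mul_one]
          rfl
        calc (s ^ p) ⊗ₜ[↥S'] (1 : S) = ((⟨s ^ p, hc⟩ : ↥S') • (1 : S)) ⊗ₜ[↥S'] (1 : S) := by
              rw [hsm]
        _ = (1 : S) ⊗ₜ[↥S'] ((⟨s ^ p, hc⟩ : ↥S') • (1 : S)) := TensorProduct.smul_tmul _ _ _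
        _ = (1 : S) ⊗ₜ[↥S'] (s ^ p) := by rw [hsm]
      rw [sub_pow_char, Algebra.TensorProduct.tmul_pow, Algebra.TensorProduct.tmul_pow,
        one_pow, h1s, sub_self]
    have heI : e ∈ KaehlerDifferential.ideal (↥S') S := by
      rw [hIe]; exact Ideal.mem_span_singleton_self e
    have he0 : e = 0 := idem_eq_zero_of_nilpotent he (mem_nilradical.mp (hle heI))
    rw [hIe, he0]
    simp
  have htt : ∀ s : S, s ⊗ₜ[↥S'] (1 : S) = (1 : S) ⊗ₜ[↥S'] s := by
    intro s
    have h := KaehlerDifferential.one_smul_sub_smul_one_mem_ideal (↥S') s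
    rw [hIbot, Ideal.mem_bot, sub_eq_zero] at h
    exact h.symm
  -- S is finite over S'
  haveI : Algebra.IsIntegral (↥S') S := by
    constructor
    intro s
    have hc : s ^ p ∈ S' := Algebra.subset_adjoin ⟨s, rfl⟩
    refine IsIntegral.of_pow (Fact.out : p.Prime).pos ?_
    have : algebraMap (↥S') S ⟨s ^ p, hc⟩ = s ^ p := rfl
    rw [← this]
    exact isIntegral_algebraMap
  haveI : Module.Finite (↥S') S := Algebra.IsIntegral.finite
  have hS'surj : Function.Surjective (algebraMap (↥S') S) :=
    Algebra.isEpi_iff_surjective_algebraMap_of_finite.mp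
      ((Algebra.isEpi_iff_forall_one_tmul_eq _ _).mpr fun s => (htt s).symm)
  -- surjectivity of theta
  have hsurj : Function.Surjective (theta p R S) := by
    intro s
    obtain ⟨c, hcs⟩ := hS'surj (show S from s)
    have hmem : (c : S) ∈ S' := c.2
    have : ∀ x ∈ S', ∃ t, theta p R S t = (x :) := by
      intro x hx
      induction hx using Algebra.adjoin_induction with
      | mem y hy =>
        obtain ⟨s₀, rfl⟩ := hy
        refine ⟨(1 : Rp p R) ⊗ₜ s₀, ?_⟩
        rw [theta_tmul]
        show algebraMap R S 1 * s₀ ^ p = s₀ ^ p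
        rw [map_one, one_mul]
      | algebraMap r =>
        refine ⟨(show Rp p R from r) ⊗ₜ (1 : S), ?_⟩
        rw [theta_tmul]
        show algebraMap R S r * 1 ^ p = algebraMap R S r
        rw [one_pow, mul_one]
      | add y z _ _ hy hz =>
        obtain ⟨ty, hty⟩ := hy
        obtain ⟨tz, htz⟩ := hz
        refine ⟨ty + tz, ?_⟩
        rw [map_add, hty, htz]
        rfl
      | mul y z _ _ hy hz =>
        obtain ⟨ty, hty⟩ := hy
        obtain ⟨tz, htz⟩ := hz
        refine ⟨ty * tz, ?_⟩
        rw [map_mul, hty, htz]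
        rfl
    obtain ⟨t, ht⟩ := this (c : S) hmem
    refine ⟨t, ?_⟩
    rw [ht]
    exact hcs
  -- injectivity of theta
  have hker : IsNilpotent (RingHom.ker (theta p R S).toRingHom) := by
    have hfg : (RingHom.ker (theta p R S).toRingHom).FG :=
      Algebra.FinitePresentation.ker_fG_of_surjective (theta p R S) hsurj
    have hle : RingHom.ker (theta p R S).toRingHom ≤ Ideal.radical ⊥ := by
      intro x hx
      refine Ideal.mem_radical_iff.mpr ⟨p, ?_⟩
      rw [Ideal.mem_bot, pow_p_eq]
      have hx0 : theta p R S x = 0 := hx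
      rw [hx0]
      show (1 : Rp p R) ⊗ₜ[R] (0 : S) = 0
      rw [TensorProduct.tmul_zero]
    obtain ⟨n, hn⟩ := Ideal.exists_pow_le_of_le_radical_of_fg hle hfg
    exact ⟨n, le_bot_iff.mp hn⟩
  have hinj : Function.Injective (theta p R S) := by
    set σ : Sp p S →ₐ[Rp p R] (Rp p R) ⊗[R] S :=
      Algebra.FormallySmooth.liftOfSurjective (AlgHom.id (Rp p R) (Sp p S)) (theta p R S)
        hsurj hker with hσdef
    have hσ : ∀ x, theta p R S (σ x) = x := fun x =>
      Algebra.FormallySmooth.liftOfSurjective_apply _ (theta p R S) hsurj hker x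
    have hστ : σ.comp (theta p R S) = AlgHom.id _ _ := by
      apply Algebra.FormallyUnramified.lift_unique_of_ringHom
        (f := (theta p R S).toRingHom) hker
      refine RingHom.ext fun x => ?_
      show theta p R S (σ (theta p R S x)) = theta p R S x
      rw [hσ]
    intro a b hab
    have ha := AlgHom.congr_fun hστ a
    have hb := AlgHom.congr_fun hστ b
    show a = b
    rw [show (AlgHom.id _ _) a = a from rfl] at ha
    rw [show (AlgHom.id _ _) b = b from rfl] at hb
    rw [← ha, ← hb]
    show σ (theta p R S a) = σ (theta p R S b)
    rw [hab]
  exact ⟨hinj, hsurj⟩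

end Stmt9Aux

/-- For an étale algebra `S` over a ring `R` of characteristic `p`, the square formed by
the Frobenii of `R` and `S` and the structure map `R → S` is cocartesian; equivalently the
relative Frobenius `R^{1/p} ⊗_R S → S^{1/p}` is an isomorphism. -/
theorem stmt9 (p : ℕ) [Fact p.Prime] (R : Type) [CommRing R] [CharP R p]
    (S : Type) [CommRing S] [Algebra R S] [CharP S p] (hS : Algebra.Etale R S) :
    IsRingPushout (frobenius R p) (algebraMap R S) (algebraMap R S) (frobenius S p) := by
  classical
  obtain ⟨hinj, hsurj⟩ := Stmt9Aux.theta_bijective p R S hS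
  constructor
  · ext r
    show algebraMap R S (frobenius R p r) = frobenius S p (algebraMap R S r)
    exact (algebraMap R S).map_frobenius p r
  · intro E _ u v huv
    letI : Algebra R E := (v.comp (algebraMap R S)).toAlgebra
    -- the two legs as algebra homs
    let f : Stmt9Aux.Rp p R →ₐ[R] E :=
      { toFun := fun x => u (show R from x)
        map_one' := map_one u
        map_mul' := fun x y => map_mul u x y
        map_zero' := map_zero u
        map_add' := fun x y => map_add u x y
        commutes' := fun r => by
          show u (frobenius R p r) = v (algebraMap R S r)
          exact RingHom.congr_fun huv r }
    let g : S →ₐ[R] E :=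
      { toFun := fun s => v s
        map_one' := map_one v
        map_mul' := fun x y => map_mul v x y
        map_zero' := map_zero v
        map_add' := fun x y => map_add v x y
        commutes' := fun r => rfl }
    let Ψ : (Stmt9Aux.Rp p R) ⊗[R] S →ₐ[R] E := Algebra.TensorProduct.productMap f g
    -- invert theta
    have hbij : Function.Bijective (Stmt9Aux.theta p R S).toRingHom := ⟨hinj, hsurj⟩
    let eqv : ((Stmt9Aux.Rp p R) ⊗[R] S) ≃+* Stmt9Aux.Sp p S :=
      RingEquiv.ofBijective (Stmt9Aux.theta p R S).toRingHom hbij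
    let w : S →+* E := Ψ.toRingHom.comp (eqv.symm.toRingHom)
    have hkey : ∀ x : (Stmt9Aux.Rp p R) ⊗[R] S, w (Stmt9Aux.theta p R S x) = Ψ x := by
      intro x
      show Ψ (eqv.symm (eqv x)) = Ψ x
      rw [eqv.symm_apply_apply]
    have halg : ∀ r : R,
        Stmt9Aux.theta p R S ((show Stmt9Aux.Rp p R from r) ⊗ₜ (1 : S)) =
          (algebraMap R S r :) := by
      intro r
      rw [Stmt9Aux.theta_tmul]
      show algebraMap R S r * 1 ^ p = algebraMap R S r
      rw [one_pow, mul_one]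
    have hfrob : ∀ s : S,
        Stmt9Aux.theta p R S ((1 : Stmt9Aux.Rp p R) ⊗ₜ s) = (s ^ p :) := by
      intro s
      rw [Stmt9Aux.theta_tmul]
      show algebraMap R S 1 * s ^ p = s ^ p
      rw [map_one, one_mul]
    refine ⟨w, ⟨?_, ?_⟩, ?_⟩
    · ext r
      show w (algebraMap R S r) = u r
      have := hkey ((show Stmt9Aux.Rp p R from r) ⊗ₜ (1 : S))
      rw [halg r] at this
      rw [this]
      show f _ * g 1 = u r
      show u r * v 1 = u r
      rw [map_one, mul_one]
    · ext s
      show w (frobenius S p s) = v s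
      have := hkey ((1 : Stmt9Aux.Rp p R) ⊗ₜ s)
      rw [hfrob s] at this
      show w (s ^ p) = v s
      rw [this]
      show f 1 * g s = v s
      show u 1 * v s = v s
      rw [map_one, one_mul]
    · intro w' hw'
      obtain ⟨hw1, hw2⟩ := hw'
      have hwθ : ∀ x : (Stmt9Aux.Rp p R) ⊗[R] S,
          w' (Stmt9Aux.theta p R S x) = Ψ x := by
        intro x
        induction x using TensorProduct.induction_on with
        | zero =>
          simp only [map_zero]
          exact map_zero w'
        | tmul r s =>
          rw [Stmt9Aux.theta_tmul]
          show w' (algebraMap R S (show R from r) * s ^ p) = Ψ (r ⊗ₜ s)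
          rw [map_mul]
          have h1 : w' (algebraMap R S (show R from r)) = u (show R from r) :=
            RingHom.congr_fun hw1 _
          have h2 : w' (s ^ p) = v s := RingHom.congr_fun hw2 s
          rw [h1, h2]
          show _ = f r * g s
          show u (show R from r) * v s = u (show R from r) * v s
          rfl
        | add x y hx hy =>
          rw [map_add]
          exact (map_add w' _ _).trans (by rw [hx, hy, map_add])
      ext s
      have h0 : ∀ x, w x = w' x := by
        intro x
        obtain ⟨t, ht⟩ := hsurj x
        rw [← ht]
        rw [hkey t, hwθ t]
      exact (h0 s).symm
end

section
/- Let R → R' be a faithfully flat ring map, and let R → S be a ring map of finite presentation. If S ⊗_R R' is étale over R', then S is étale over R. -/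
open TensorProduct

namespace FFDescent

variable (R R' : Type) [CommRing R] [CommRing R'] [Algebra R R']

section modules

variable (M : Type) [AddCommGroup M] [Module R M]

/-- `m ↦ 1 ⊗ m`. -/
noncomputable def j : M →ₗ[R] R' ⊗[R] M := TensorProduct.mk R R' M 1

@[simp] lemma j_apply (m : M) : j R R' M m = (1 : R') ⊗ₜ[R] m := rfl

/-- Multiply the first two tensor factors. -/
noncomputable def mu : R' ⊗[R] (R' ⊗[R] M) →ₗ[R] R' ⊗[R] M :=
  (LinearMap.mul' R R').rTensor M ∘ₗ (TensorProduct.assoc R R' R' M).symm.toLinearMap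

@[simp] lemma mu_tmul (r s : R') (m : M) :
    mu R R' M (r ⊗ₜ (s ⊗ₜ m)) = (r * s) ⊗ₜ m := by
  simp [mu]

lemma mu_lTensor_j (x : R' ⊗[R] M) : mu R R' M ((j R R' M).lTensor R' x) = x := by
  induction x using TensorProduct.induction_on with
  | zero => simp
  | tmul r m => simp
  | add x y hx hy => simp [map_add, hx, hy]

variable [Module.FaithfullyFlat R R']

lemma j_injective : Function.Injective (j R R' M) := by
  have h1 : Function.Injective ((j R R' M).lTensor R') :=
    Function.LeftInverse.injective (g := mu R R' M) (mu_lTensor_j R R' M)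
  have hcomp : (j R R' M) ∘ₗ (LinearMap.ker (j R R' M)).subtype = 0 := by
    ext ⟨y, hy⟩; exact hy
  have h2 : ((LinearMap.ker (j R R' M)).subtype).lTensor R' = 0 := by
    apply LinearMap.ext; intro z
    apply h1
    rw [← LinearMap.comp_apply, ← LinearMap.lTensor_comp, hcomp]
    simp
  have h4 : (LinearMap.ker (j R R' M)).subtype = 0 :=
    (Module.FaithfullyFlat.zero_iff_lTensor_zero R R' _).mpr h2
  rw [← LinearMap.ker_eq_bot, eq_bot_iff]
  intro x hx
  simpa using LinearMap.congr_fun h4 ⟨x, hx⟩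

lemma amitsur (x : R' ⊗[R] M)
    (hx : j R R' (R' ⊗[R] M) x = (j R R' M).lTensor R' x) :
    ∃ m : M, (1 : R') ⊗ₜ[R] m = x := by
  set u₁ := j R R' (R' ⊗[R] M) with hu₁
  set u₂ := (j R R' M).lTensor R' with hu₂
  have hcplx : (u₁ - u₂) ∘ₗ (j R R' M) = 0 := by
    ext m; simp [hu₁, hu₂]
  have hK1 : ∀ y : R' ⊗[R] (R' ⊗[R] M), mu R R' (R' ⊗[R] M) (u₁.lTensor R' y) = y := by
    intro y; induction y using TensorProduct.induction_on with
    | zero => simp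
    | tmul a z => simp [hu₁]
    | add a b ha hb => simp [map_add, ha, hb]
  have hK2 : ∀ y : R' ⊗[R] (R' ⊗[R] M),
      mu R R' (R' ⊗[R] M) (u₂.lTensor R' y) = u₂ (mu R R' M y) := by
    intro y; induction y using TensorProduct.induction_on with
    | zero => simp
    | tmul a z =>
      induction z using TensorProduct.induction_on with
      | zero => simp
      | tmul r m => simp [hu₂]
      | add z₁ z₂ h₁ h₂ => simp only [tmul_add, map_add, h₁, h₂]
    | add a b ha hb => simp [map_add, ha, hb]
  have hex : Function.Exact ((j R R' M).lTensor R') ((u₁ - u₂).lTensor R') := by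
    intro y
    constructor
    · intro hy
      have h0 : u₁.lTensor R' y = u₂.lTensor R' y := by
        rw [LinearMap.lTensor_sub] at hy
        exact sub_eq_zero.mp (by simpa using hy)
      refine ⟨mu R R' M y, ?_⟩
      conv_rhs => rw [← hK1 y, h0, hK2]
    · rintro ⟨z, rfl⟩
      rw [← LinearMap.comp_apply, ← LinearMap.lTensor_comp, hcplx]
      simp
  have hfull : Function.Exact (j R R' M) (u₁ - u₂) :=
    Module.FaithfullyFlat.lTensor_reflects_exact R R' _ _ hex
  have hz : (u₁ - u₂) x = 0 := by
    rw [LinearMap.sub_apply, hx, sub_self]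
  obtain ⟨m, hm⟩ := (hfull x).mp hz
  exact ⟨m, hm⟩

end modules

set_option maxHeartbeats 1000000

section algebras

variable (B : Type) [CommRing B] [Algebra R B]

lemma incl_eq_j (b : B) :
    (Algebra.TensorProduct.includeRight : B →ₐ[R] R' ⊗[R] B) b = j R R' B b := rfl

lemma map_incl_eq_lTensor (y : R' ⊗[R] B) :
    Algebra.TensorProduct.map (AlgHom.id R R')
      (Algebra.TensorProduct.includeRight : B →ₐ[R] R' ⊗[R] B) y
      = (j R R' B).lTensor R' y := by
  induction y using TensorProduct.induction_on with
  | zero => simp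
  | tmul r b =>
    rw [Algebra.TensorProduct.map_tmul, LinearMap.lTensor_tmul]
    rfl
  | add a b ha hb => rw [map_add, map_add, ha, hb]

lemma coproj_incl_eq (b : B) :
    (Algebra.TensorProduct.includeRight : (R' ⊗[R] B) →ₐ[R] R' ⊗[R] (R' ⊗[R] B))
        ((Algebra.TensorProduct.includeRight : B →ₐ[R] R' ⊗[R] B) b)
      = (Algebra.TensorProduct.map (AlgHom.id R R')
          (Algebra.TensorProduct.includeRight : B →ₐ[R] R' ⊗[R] B))
        ((Algebra.TensorProduct.includeRight : B →ₐ[R] R' ⊗[R] B) b) := by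
  rw [show (Algebra.TensorProduct.includeRight : B →ₐ[R] R' ⊗[R] B) b = (1 : R') ⊗ₜ[R] b
    from rfl, Algebra.TensorProduct.map_tmul]
  rfl

variable (S : Type) [CommRing S] [Algebra R S] [Module.FaithfullyFlat R R']

theorem unramified_descent [Algebra.FormallyUnramified R' (R' ⊗[R] S)] :
    Algebra.FormallyUnramified R S := by
  rw [Algebra.FormallyUnramified.iff_comp_injective]
  intro B _ _ I hI g₁ g₂ hg
  let incl : B →ₐ[R] R' ⊗[R] B := Algebra.TensorProduct.includeRight
  let I' : Ideal (R' ⊗[R] B) := I.map incl.toRingHom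
  have hI' : I' ^ 2 = ⊥ := by
    show (I.map incl.toRingHom) ^ 2 = ⊥
    rw [← Ideal.map_pow, hI, Ideal.map_bot]
  let G₁ := Algebra.TensorProduct.map (AlgHom.id R' R') g₁
  let G₂ := Algebra.TensorProduct.map (AlgHom.id R' R') g₂
  have hG : (Ideal.Quotient.mkₐ R' I').comp G₁ = (Ideal.Quotient.mkₐ R' I').comp G₂ := by
    apply Algebra.TensorProduct.ext
    · exact Subsingleton.elim _ _
    · apply AlgHom.ext
      intro s
      have hsub : g₁ s - g₂ s ∈ I := by
        have := AlgHom.congr_fun hg s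
        simp only [AlgHom.coe_comp, Function.comp_apply, Ideal.Quotient.mkₐ_eq_mk] at this
        rwa [Ideal.Quotient.eq] at this
      show Ideal.Quotient.mk I' (G₁ ((1 : R') ⊗ₜ[R] s)) = Ideal.Quotient.mk I' (G₂ ((1 : R') ⊗ₜ[R] s))
      have e₁ : G₁ ((1 : R') ⊗ₜ[R] s) = (1 : R') ⊗ₜ[R] g₁ s := by
        show Algebra.TensorProduct.map (AlgHom.id R' R') g₁ ((1 : R') ⊗ₜ[R] s) = _
        rw [Algebra.TensorProduct.map_tmul]; rfl
      have e₂ : G₂ ((1 : R') ⊗ₜ[R] s) = (1 : R') ⊗ₜ[R] g₂ s := by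
        show Algebra.TensorProduct.map (AlgHom.id R' R') g₂ ((1 : R') ⊗ₜ[R] s) = _
        rw [Algebra.TensorProduct.map_tmul]; rfl
      rw [e₁, e₂, Ideal.Quotient.eq]
      have : (1 : R') ⊗ₜ[R] g₁ s - (1 : R') ⊗ₜ[R] g₂ s = incl (g₁ s - g₂ s) := by
        rw [map_sub]; rfl
      rw [this]
      exact Ideal.mem_map_of_mem _ hsub
  have hGG : G₁ = G₂ := Algebra.FormallyUnramified.comp_injective I' hI' hG
  ext s
  apply j_injective R R' B
  have h1 := AlgHom.congr_fun hGG ((1 : R') ⊗ₜ[R] s)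
  show (1 : R') ⊗ₜ[R] g₁ s = (1 : R') ⊗ₜ[R] g₂ s
  calc (1 : R') ⊗ₜ[R] g₁ s = G₁ ((1 : R') ⊗ₜ[R] s) := by
        show _ = Algebra.TensorProduct.map (AlgHom.id R' R') g₁ ((1 : R') ⊗ₜ[R] s)
        rw [Algebra.TensorProduct.map_tmul]; rfl
    _ = G₂ ((1 : R') ⊗ₜ[R] s) := h1
    _ = (1 : R') ⊗ₜ[R] g₂ s := by
        show Algebra.TensorProduct.map (AlgHom.id R' R') g₂ ((1 : R') ⊗ₜ[R] s) = _
        rw [Algebra.TensorProduct.map_tmul]; rfl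

theorem smooth_descent [Algebra.FormallyUnramified R S]
    [Algebra.FormallySmooth R' (R' ⊗[R] S)] :
    Algebra.FormallySmooth R S := by
  apply Algebra.FormallySmooth.of_comp_surjective
  intro B _ _ I hI f
  let incl : B →ₐ[R] R' ⊗[R] B := Algebra.TensorProduct.includeRight
  let I' : Ideal (R' ⊗[R] B) := I.map incl.toRingHom
  have hI' : I' ^ 2 = ⊥ := by
    show (I.map incl.toRingHom) ^ 2 = ⊥
    rw [← Ideal.map_pow, hI, Ideal.map_bot]
  -- ψ : B⧸I →ₐ[R] (R'⊗B)⧸I'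
  have hψ0 : ∀ a ∈ I,
      ((((Ideal.Quotient.mkₐ R' I').restrictScalars R).comp incl) a) = 0 := by
    intro a ha
    show Ideal.Quotient.mk I' (incl a) = 0
    rw [Ideal.Quotient.eq_zero_iff_mem]
    exact Ideal.mem_map_of_mem _ ha
  let ψ : B ⧸ I →ₐ[R] (R' ⊗[R] B) ⧸ I' :=
    Ideal.Quotient.liftₐ I (((Ideal.Quotient.mkₐ R' I').restrictScalars R).comp incl) hψ0
  have hψ : ∀ b : B, ψ (Ideal.Quotient.mk I b) = Ideal.Quotient.mk I' (incl b) := fun b => rfl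
  -- the base-changed lifting problem
  let f' : R' ⊗[R] S →ₐ[R'] (R' ⊗[R] B) ⧸ I' :=
    Algebra.TensorProduct.lift (Algebra.ofId R' _) (ψ.comp f) (fun x y => Commute.all _ _)
  have hf' : ∀ s : S, f' ((1 : R') ⊗ₜ[R] s) = ψ (f s) := by
    intro s
    show Algebra.TensorProduct.lift (Algebra.ofId R' _) (ψ.comp f) (fun x y => Commute.all _ _)
      ((1 : R') ⊗ₜ[R] s) = ψ (f s)
    rw [Algebra.TensorProduct.lift_tmul, map_one, one_mul]
    rfl
  obtain ⟨L, hL⟩ := Algebra.FormallySmooth.comp_surjective R' (R' ⊗[R] S) I' hI' f'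
  let l : S →ₐ[R] R' ⊗[R] B :=
    (L.restrictScalars R).comp Algebra.TensorProduct.includeRight
  have hlmk : ∀ s : S, Ideal.Quotient.mk I' (l s) = ψ (f s) := by
    intro s
    have h := AlgHom.congr_fun hL ((1 : R') ⊗ₜ[R] s)
    rw [← hf' s, ← h]
    rfl
  -- the two coprojections to the triple tensor product
  let v₁ : R' ⊗[R] B →ₐ[R] R' ⊗[R] (R' ⊗[R] B) := Algebra.TensorProduct.includeRight
  let v₂ : R' ⊗[R] B →ₐ[R] R' ⊗[R] (R' ⊗[R] B) :=
    Algebra.TensorProduct.map (AlgHom.id R R') incl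
  have hvincl : ∀ b : B, v₁ (incl b) = v₂ (incl b) := fun b => coproj_incl_eq R R' B b
  let I'' : Ideal (R' ⊗[R] (R' ⊗[R] B)) := I'.map v₁.toRingHom
  have hI'' : I'' ^ 2 = ⊥ := by
    show (I'.map v₁.toRingHom) ^ 2 = ⊥
    rw [← Ideal.map_pow, hI', Ideal.map_bot]
  have hmem₁ : ∀ a ∈ I', ((Ideal.Quotient.mkₐ R I'').comp v₁) a = 0 := by
    intro a ha
    show Ideal.Quotient.mk I'' (v₁ a) = 0
    rw [Ideal.Quotient.eq_zero_iff_mem]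
    exact Ideal.mem_map_of_mem _ ha
  have hI''v₂ : I'' = I'.map v₂.toRingHom := by
    show (I.map incl.toRingHom).map v₁.toRingHom = (I.map incl.toRingHom).map v₂.toRingHom
    rw [Ideal.map_map, Ideal.map_map]
    have : (v₁.toRingHom).comp incl.toRingHom = (v₂.toRingHom).comp incl.toRingHom :=
      RingHom.ext fun b => hvincl b
    rw [this]
  have hmem₂ : ∀ a ∈ I', ((Ideal.Quotient.mkₐ R I'').comp v₂) a = 0 := by
    intro a ha
    show Ideal.Quotient.mk I'' (v₂ a) = 0
    rw [Ideal.Quotient.eq_zero_iff_mem, hI''v₂]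
    exact Ideal.mem_map_of_mem _ ha
  let w₁ : (R' ⊗[R] B) ⧸ I' →ₐ[R] (R' ⊗[R] (R' ⊗[R] B)) ⧸ I'' :=
    Ideal.Quotient.liftₐ I' ((Ideal.Quotient.mkₐ R I'').comp v₁) hmem₁
  let w₂ : (R' ⊗[R] B) ⧸ I' →ₐ[R] (R' ⊗[R] (R' ⊗[R] B)) ⧸ I'' :=
    Ideal.Quotient.liftₐ I' ((Ideal.Quotient.mkₐ R I'').comp v₂) hmem₂
  have hw₁ : ∀ x, w₁ (Ideal.Quotient.mk I' x) = Ideal.Quotient.mk I'' (v₁ x) := fun x => rfl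
  have hw₂ : ∀ x, w₂ (Ideal.Quotient.mk I' x) = Ideal.Quotient.mk I'' (v₂ x) := fun x => rfl
  -- the two composites agree modulo I''
  have hw : (Ideal.Quotient.mkₐ R I'').comp (v₁.comp l)
      = (Ideal.Quotient.mkₐ R I'').comp (v₂.comp l) := by
    apply AlgHom.ext
    intro s
    obtain ⟨b, hb⟩ := Ideal.Quotient.mk_surjective (f s)
    show Ideal.Quotient.mk I'' (v₁ (l s)) = Ideal.Quotient.mk I'' (v₂ (l s))
    rw [← hw₁ (l s), ← hw₂ (l s), hlmk s, ← hb, hψ b, hw₁, hw₂, hvincl b]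
  have hv : v₁.comp l = v₂.comp l :=
    Algebra.FormallyUnramified.comp_injective I'' hI'' hw
  -- descend `l` to a map into `B`
  have hinj : Function.Injective incl := by
    intro x y hxy
    exact j_injective R R' B hxy
  have hmemT : ∀ s : S, l s ∈ incl.range := by
    intro s
    have hx : j R R' (R' ⊗[R] B) (l s) = (j R R' B).lTensor R' (l s) := by
      have h1 : v₁ (l s) = j R R' (R' ⊗[R] B) (l s) := rfl
      have h2 : v₂ (l s) = (j R R' B).lTensor R' (l s) := map_incl_eq_lTensor R R' B (l s)
      rw [← h1, ← h2]
      exact AlgHom.congr_fun hv s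
    obtain ⟨m, hm⟩ := amitsur R R' B (l s) hx
    exact ⟨m, hm⟩
  let e : B ≃ₐ[R] incl.range := AlgEquiv.ofInjective incl hinj
  let g : S →ₐ[R] B := (e.symm : incl.range →ₐ[R] B).comp (l.codRestrict incl.range hmemT)
  have hgl : ∀ s : S, incl (g s) = l s := by
    intro s
    have h1 : e (g s) = l.codRestrict incl.range hmemT s := e.apply_symm_apply _
    have h2 := congrArg Subtype.val h1
    exact h2
  refine ⟨g, ?_⟩
  -- verification, using the natural map `χ' : (R'⊗B)⧸I' →ₐ R'⊗(B⧸I)`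
  let χ : R' ⊗[R] B →ₐ[R] R' ⊗[R] (B ⧸ I) :=
    Algebra.TensorProduct.map (AlgHom.id R R') (Ideal.Quotient.mkₐ R I)
  have hχ0 : ∀ a ∈ I', χ a = 0 := by
    have hle : I' ≤ RingHom.ker χ.toRingHom := by
      refine Ideal.map_le_iff_le_comap.mpr ?_
      intro a ha
      simp only [Ideal.mem_comap, RingHom.mem_ker]
      show χ (incl a) = 0
      have h3 : χ (incl a) = (1 : R') ⊗ₜ[R] (Ideal.Quotient.mk I a) := by
        show Algebra.TensorProduct.map (AlgHom.id R R') (Ideal.Quotient.mkₐ R I)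
          ((1 : R') ⊗ₜ[R] a) = _
        rw [Algebra.TensorProduct.map_tmul]
        rfl
      rw [h3, Ideal.Quotient.eq_zero_iff_mem.mpr ha, TensorProduct.tmul_zero]
    intro a ha
    exact hle ha
  let χ' : (R' ⊗[R] B) ⧸ I' →ₐ[R] R' ⊗[R] (B ⧸ I) := Ideal.Quotient.liftₐ I' χ hχ0
  have hχ' : ∀ x, χ' (Ideal.Quotient.mk I' x) = χ x := fun x => rfl
  have hχψ : ∀ y : B ⧸ I, χ' (ψ y) = (1 : R') ⊗ₜ[R] y := by
    intro y
    obtain ⟨b, rfl⟩ := Ideal.Quotient.mk_surjective y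
    rw [hψ b, hχ']
    show Algebra.TensorProduct.map (AlgHom.id R R') (Ideal.Quotient.mkₐ R I)
      ((1 : R') ⊗ₜ[R] b) = _
    rw [Algebra.TensorProduct.map_tmul]
    rfl
  apply AlgHom.ext
  intro s
  show Ideal.Quotient.mk I (g s) = f s
  apply j_injective R R' (B ⧸ I)
  show (1 : R') ⊗ₜ[R] (Ideal.Quotient.mk I (g s)) = (1 : R') ⊗ₜ[R] (f s)
  rw [← hχψ, ← hχψ, hψ (g s), hgl s, hlmk s]

end algebras

end FFDescent

/-- Faithfully flat descent of étaleness: if `R → R'` is faithfully flat, `R → S` is of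
finite presentation, and `R' ⊗_R S` is étale over `R'`, then `S` is étale over `R`. -/
theorem stmt11 (R R' S : Type) [CommRing R] [CommRing R'] [CommRing S]
    [Algebra R R'] [Algebra R S] [Module.FaithfullyFlat R R']
    (hfp : Algebra.FinitePresentation R S)
    (hEt : Algebra.Etale R' (TensorProduct R R' S)) :
    Algebra.Etale R S := by
  haveI := hEt.formallyEtale
  haveI : Algebra.FormallyUnramified R' (TensorProduct R R' S) := inferInstance
  haveI : Algebra.FormallySmooth R' (TensorProduct R R' S) := inferInstance
  haveI hU : Algebra.FormallyUnramified R S := FFDescent.unramified_descent R R' S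
  haveI hSm : Algebra.FormallySmooth R S := FFDescent.smooth_descent R R' S
  exact ⟨Algebra.FormallyEtale.iff_formallyUnramified_and_formallySmooth.mpr ⟨hU, hSm⟩, hfp⟩
end
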